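/- Let n and m_n be positive integers with 2·m_n ≤ n, let W : {−m_n,…,m_n} → ℝ satisfy W(m) ≥ 0 and ∑_{|m|≤m_n} W(m) = 1, and let K : {−m_n,…,m_n} → ℝ. Set W* = max_{|m|≤m_n} W(m) and K* = max_{|m|≤m_n} |K(m)|. Then ∑_{j₁=1}^{n} ∑_{j₂=1}^{n} |∑_{|m|≤m_n} W(m)·K(m)·e^{i(j₁−j₂)m/n}|² ≤ C·W*·(K*·n)² for an absolute constant C (e.g. C = 1 + 8L⁻²·π²/6 where L is such that |e^{ix}−1| ≥ L|x| on [0,1]). -/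

import Mathlib

open Finset

noncomputable def ee (x : ℝ) : ℂ := Complex.exp ((x : ℂ) * Complex.I)

lemma ee_mul (x y : ℝ) : ee x * ee y = ee (x + y) := by
  rw [ee, ee, ee, ← Complex.exp_add]
  congr 1; push_cast; ring

lemma conj_ee (x : ℝ) : (starRingEnd ℂ) (ee x) = ee (-x) := by
  rw [ee, ee, ← Complex.exp_conj]
  congr 1
  simp [Complex.conj_I]

lemma abs_ee (x : ℝ) : ‖ee x‖ = 1 := Complex.norm_exp_ofReal_mul_I x

lemma ee_sub_one_lb {x : ℝ} (h1 : |x| ≤ 1) : |x| / 2 ≤ ‖ee x - 1‖ := by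
  have hpi : |x| ≤ Real.pi := h1.trans (by linarith [Real.pi_gt_three])
  have h2 : ‖ee x - 1‖ ^ 2 = 2 - 2 * Real.cos x := by
    rw [Complex.sq_norm, Complex.normSq_apply]
    simp only [ee, Complex.sub_re, Complex.sub_im, Complex.exp_ofReal_mul_I_re,
      Complex.exp_ofReal_mul_I_im, Complex.one_re, Complex.one_im]
    nlinarith [Real.sin_sq_add_cos_sq x]
  have hcos : Real.cos x ≤ 1 - 2 / Real.pi ^ 2 * x ^ 2 := Real.cos_le_one_sub_mul_cos_sq hpi
  have hpi2 : Real.pi ^ 2 ≤ 16 := by nlinarith [Real.pi_le_four, Real.pi_pos]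
  have hpi0 : (0:ℝ) < Real.pi ^ 2 := by positivity
  have hq : x ^ 2 / 4 ≤ ‖ee x - 1‖ ^ 2 := by
    have : 2 / Real.pi ^ 2 ≥ 1 / 8 := by
      rw [ge_iff_le, div_le_div_iff₀ (by norm_num) hpi0]; nlinarith
    nlinarith [sq_nonneg x]
  have habs : (0:ℝ) ≤ ‖ee x - 1‖ := norm_nonneg _
  nlinarith [sq_abs x, abs_nonneg x]

lemma sumA (n : ℕ) (t : ℝ) :
    ∑ j₁ ∈ Finset.Icc 1 n, ∑ j₂ ∈ Finset.Icc 1 n, ee (((j₁ : ℝ) - (j₂ : ℝ)) * t)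
      = (Complex.normSq (∑ j ∈ Finset.Icc 1 n, ee ((j : ℝ) * t)) : ℂ) := by
  rw [← Complex.mul_conj, map_sum, Finset.sum_mul_sum]
  refine Finset.sum_congr rfl fun j₁ _ => Finset.sum_congr rfl fun j₂ _ => ?_
  rw [conj_ee, ee_mul]
  congr 1; ring

lemma geom_bound {n : ℕ} (hn : 0 < n) {k : ℤ} (hk : k ≠ 0) (hkn : |k| ≤ (n : ℤ)) :
    Complex.normSq (∑ j ∈ Finset.Icc 1 n, ee ((j : ℝ) * ((k : ℝ) / (n : ℝ))))
      ≤ 16 * (n : ℝ) ^ 2 / (k : ℝ) ^ 2 := by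
  have hnR : (0:ℝ) < n := by exact_mod_cast hn
  set x : ℝ := (k : ℝ) / (n : ℝ) with hx
  have hkR : (0:ℝ) < |(k:ℝ)| := by
    simp only [abs_pos]; exact_mod_cast hk
  have hxabs : |x| ≤ 1 := by
    rw [hx, abs_div, abs_of_pos hnR, div_le_one hnR]
    exact_mod_cast (by simpa using hkn)
  have hxpos : 0 < |x| := by
    rw [hx, abs_div, abs_of_pos hnR]
    positivity
  have hlb := ee_sub_one_lb hxabs
  have hz1 : ee x - 1 ≠ 0 := by
    intro h
    rw [h] at hlb
    simp at hlb
    linarith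
  set z : ℂ := ee x with hz
  have hj : ∀ j : ℕ, ee ((j : ℝ) * x) = z ^ j := by
    intro j
    rw [hz, ee, ee, ← Complex.exp_nat_mul]
    congr 1; push_cast; ring
  have hsum : ∑ j ∈ Finset.Icc 1 n, ee ((j : ℝ) * x) = z * ((z ^ n - 1) / (z - 1)) := by
    rw [Finset.sum_congr rfl fun j _ => hj j]
    rw [show Finset.Icc 1 n = Finset.Ico 1 (n+1) by rfl]
    rw [Finset.sum_Ico_eq_sum_range]
    simp only [Nat.add_sub_cancel, pow_add, pow_one]
    rw [← Finset.mul_sum, geom_sum_eq (by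
      intro h; apply hz1; rw [sub_eq_zero]; exact h)]
  have habsz : ‖z‖ = 1 := abs_ee x
  have habs : ‖∑ j ∈ Finset.Icc 1 n, ee ((j : ℝ) * x)‖ ≤ 4 / |x| := by
    rw [hsum, norm_mul, habsz, one_mul, norm_div]
    have h1 : ‖z ^ n - 1‖ ≤ 2 := by
      calc ‖z ^ n - 1‖ ≤ ‖z ^ n‖ + ‖(1:ℂ)‖ := norm_sub_le (z ^ n) 1
        _ = 2 := by rw [norm_pow, habsz]; norm_num
    have h2 : |x| / 2 ≤ ‖z - 1‖ := hlb
    have h3 : 0 < ‖z - 1‖ := lt_of_lt_of_le (by positivity) h2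
    calc ‖z ^ n - 1‖ / ‖z - 1‖ ≤ 2 / (|x| / 2) :=
          div_le_div₀ (by norm_num) h1 (by positivity) h2
      _ = 4 / |x| := by rw [div_div_eq_mul_div]; norm_num
  have h4 : (4 / |x|) ^ 2 = 16 * (n : ℝ) ^ 2 / (k : ℝ) ^ 2 := by
    have hk2 : ((k:ℝ))^2 ≠ 0 := by positivity
    rw [div_pow, sq_abs, hx, div_pow]
    field_simp
    norm_num
  calc Complex.normSq (∑ j ∈ Finset.Icc 1 n, ee ((j : ℝ) * x))
      = ‖∑ j ∈ Finset.Icc 1 n, ee ((j : ℝ) * x)‖ ^ 2 := (Complex.sq_norm _).symm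
    _ ≤ (4 / |x|) ^ 2 := pow_le_pow_left₀ (norm_nonneg _) habs 2
    _ = 16 * (n : ℝ) ^ 2 / (k : ℝ) ^ 2 := h4

lemma symsum (N : ℕ) :
    ∑ k ∈ (Finset.Icc (-(N : ℤ)) (N : ℤ)).erase 0, 1 / ((k : ℝ)) ^ 2 ≤ 4 - 2 / (N : ℝ) := by
  induction N with
  | zero => simp
  | succ N ih =>
    rcases Nat.eq_zero_or_pos N with hN | hN
    · subst hN
      have hset : (Finset.Icc (-(1 : ℤ)) (1 : ℤ)).erase 0 = {-1, 1} := by decide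
      norm_num [hset]
    · have hNR : (1:ℝ) ≤ (N : ℝ) := by exact_mod_cast hN
      have hset : (Finset.Icc (-((N+1 : ℕ) : ℤ)) (((N+1 : ℕ)) : ℤ)).erase 0
          = insert (-((N:ℤ)+1)) (insert ((N:ℤ)+1) ((Finset.Icc (-(N : ℤ)) ((N : ℤ))).erase 0)) := by
        ext a
        simp only [Finset.mem_erase, Finset.mem_Icc, Finset.mem_insert]
        push_cast
        omega
      rw [hset, Finset.sum_insert, Finset.sum_insert]
      · have hcast : ((-((N:ℤ)+1) : ℤ) : ℝ) = -((N:ℝ)+1) := by push_cast; ring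
        have hcast2 : ((((N:ℤ)+1) : ℤ) : ℝ) = (N:ℝ)+1 := by push_cast; ring
        rw [hcast, hcast2]
        have ha : (0:ℝ) < (N:ℝ) := by linarith
        have hb : (0:ℝ) < (N:ℝ)+1 := by linarith
        have key : 2/((N:ℝ)+1)^2 + 2/((N:ℝ)+1) ≤ 2/(N:ℝ) := by
          rw [div_add_div _ _ (by positivity) (by positivity),
            div_le_div_iff₀ (by positivity) (by positivity)]
          nlinarith
        have hsq : (-((N:ℝ)+1))^2 = ((N:ℝ)+1)^2 := by ring
        rw [hsq]
        have h2 : 2/((N:ℝ)+1)^2 = 1/((N:ℝ)+1)^2 + 1/((N:ℝ)+1)^2 := by ring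
        push_cast
        linarith
      · simp only [Finset.mem_erase, Finset.mem_Icc]
        omega
      · simp only [Finset.mem_insert, Finset.mem_erase, Finset.mem_Icc]
        omega

lemma swap4 {α β : Type*} (J : Finset α) (s : Finset β) (f : α → α → β → β → ℂ) :
    ∑ j₁ ∈ J, ∑ j₂ ∈ J, ∑ m ∈ s, ∑ m' ∈ s, f j₁ j₂ m m'
      = ∑ m ∈ s, ∑ m' ∈ s, ∑ j₁ ∈ J, ∑ j₂ ∈ J, f j₁ j₂ m m' :=
  calc ∑ j₁ ∈ J, ∑ j₂ ∈ J, ∑ m ∈ s, ∑ m' ∈ s, f j₁ j₂ m m'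
      = ∑ j₁ ∈ J, ∑ m ∈ s, ∑ j₂ ∈ J, ∑ m' ∈ s, f j₁ j₂ m m' :=
        Finset.sum_congr rfl fun j₁ _ => Finset.sum_comm
    _ = ∑ m ∈ s, ∑ j₁ ∈ J, ∑ j₂ ∈ J, ∑ m' ∈ s, f j₁ j₂ m m' := Finset.sum_comm
    _ = ∑ m ∈ s, ∑ j₁ ∈ J, ∑ m' ∈ s, ∑ j₂ ∈ J, f j₁ j₂ m m' :=
        Finset.sum_congr rfl fun m _ => Finset.sum_congr rfl fun j₁ _ => Finset.sum_comm
    _ = ∑ m ∈ s, ∑ m' ∈ s, ∑ j₁ ∈ J, ∑ j₂ ∈ J, f j₁ j₂ m m' :=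
        Finset.sum_congr rfl fun m _ => Finset.sum_comm

theorem smoothing_double_sum_bound :
    ∃ C : ℝ, 0 < C ∧
      ∀ (n mn : ℕ), 0 < n → 0 < mn → 2 * mn ≤ n →
      ∀ (W K : ℤ → ℝ) (Wstar Kstar : ℝ),
        (∀ m ∈ Finset.Icc (-(mn : ℤ)) (mn : ℤ), 0 ≤ W m) →
        (∑ m ∈ Finset.Icc (-(mn : ℤ)) (mn : ℤ), W m) = 1 →
        (∀ m ∈ Finset.Icc (-(mn : ℤ)) (mn : ℤ), W m ≤ Wstar) →
        (∀ m ∈ Finset.Icc (-(mn : ℤ)) (mn : ℤ), |K m| ≤ Kstar) →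
        ∑ j₁ ∈ Finset.Icc 1 n, ∑ j₂ ∈ Finset.Icc 1 n,
            ‖(∑ m ∈ Finset.Icc (-(mn : ℤ)) (mn : ℤ),
              ((W m * K m : ℝ) : ℂ) *
                Complex.exp ((((j₁ : ℝ) - (j₂ : ℝ)) * (m : ℝ) / (n : ℝ)) * Complex.I))‖ ^ 2
          ≤ C * Wstar * (Kstar * n) ^ 2 := by
  refine ⟨65, by norm_num, ?_⟩
  intro n mn hn hmn hmn2 W K Wstar Kstar hW0 hW1 hWs hKs
  have hnR : (0:ℝ) < (n:ℝ) := by exact_mod_cast hn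
  have h0s : (0:ℤ) ∈ Finset.Icc (-(mn:ℤ)) (mn:ℤ) := by simp
  have hWs0 : 0 ≤ Wstar := le_trans (hW0 0 h0s) (hWs 0 h0s)
  have hKs0 : 0 ≤ Kstar := le_trans (abs_nonneg _) (hKs 0 h0s)
  set s : Finset ℤ := Finset.Icc (-(mn:ℤ)) (mn:ℤ) with hs
  set J : Finset ℕ := Finset.Icc 1 n with hJ
  set F : ℤ → ℝ := fun k =>
    Complex.normSq (∑ j ∈ J, ee ((j:ℝ) * ((k:ℝ)/(n:ℝ)))) with hF
  have step1 : ∀ j₁ j₂ : ℕ,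
      ((‖∑ m ∈ s, ((W m * K m : ℝ) : ℂ) *
        Complex.exp ((((j₁ : ℝ) - (j₂ : ℝ)) * (m : ℝ) / (n : ℝ)) * Complex.I)‖ ^ 2 : ℝ) : ℂ)
      = ∑ m ∈ s, ∑ m' ∈ s, ((W m * K m : ℝ) : ℂ) * ((W m' * K m' : ℝ) : ℂ) *
          ee (((j₁:ℝ) - (j₂:ℝ)) * (((m:ℝ) - (m':ℝ)) / (n:ℝ))) := by
    intro j₁ j₂
    have hS : (∑ m ∈ s, ((W m * K m : ℝ) : ℂ) *
        Complex.exp ((((j₁ : ℝ) - (j₂ : ℝ)) * (m : ℝ) / (n : ℝ)) * Complex.I))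
        = ∑ m ∈ s, ((W m * K m : ℝ) : ℂ) * ee (((j₁ : ℝ) - (j₂ : ℝ)) * (m : ℝ) / (n : ℝ)) := by
      refine Finset.sum_congr rfl fun m _ => ?_
      rw [ee]
      norm_cast
    rw [hS, Complex.sq_norm, ← Complex.mul_conj, map_sum, Finset.sum_mul_sum]
    refine Finset.sum_congr rfl fun m _ => Finset.sum_congr rfl fun m' _ => ?_
    rw [map_mul, Complex.conj_ofReal, conj_ee, mul_mul_mul_comm, ee_mul]
    congr 2
    ring
  have key : (∑ j₁ ∈ J, ∑ j₂ ∈ J,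
      ‖∑ m ∈ s, ((W m * K m : ℝ) : ℂ) *
        Complex.exp ((((j₁ : ℝ) - (j₂ : ℝ)) * (m : ℝ) / (n : ℝ)) * Complex.I)‖ ^ 2)
      = ∑ m ∈ s, ∑ m' ∈ s, (W m * K m) * (W m' * K m') * F (m - m') := by
    apply Complex.ofReal_injective
    rw [Complex.ofReal_sum, Complex.ofReal_sum]
    calc ∑ j₁ ∈ J, ((∑ j₂ ∈ J, ‖∑ m ∈ s, ((W m * K m : ℝ) : ℂ) *
            Complex.exp ((((j₁ : ℝ) - (j₂ : ℝ)) * (m : ℝ) / (n : ℝ)) * Complex.I)‖ ^ 2 : ℝ) : ℂ)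
        = ∑ j₁ ∈ J, ∑ j₂ ∈ J, ∑ m ∈ s, ∑ m' ∈ s,
            ((W m * K m : ℝ) : ℂ) * ((W m' * K m' : ℝ) : ℂ) *
              ee (((j₁:ℝ) - (j₂:ℝ)) * (((m:ℝ) - (m':ℝ)) / (n:ℝ))) := by
          refine Finset.sum_congr rfl fun j₁ _ => ?_
          rw [Complex.ofReal_sum]
          exact Finset.sum_congr rfl fun j₂ _ => step1 j₁ j₂
      _ = ∑ m ∈ s, ∑ m' ∈ s, ∑ j₁ ∈ J, ∑ j₂ ∈ J,
            ((W m * K m : ℝ) : ℂ) * ((W m' * K m' : ℝ) : ℂ) *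
              ee (((j₁:ℝ) - (j₂:ℝ)) * (((m:ℝ) - (m':ℝ)) / (n:ℝ))) :=
          swap4 J s _
      _ = ∑ m ∈ s, ((∑ m' ∈ s, (W m * K m) * (W m' * K m') * F (m - m') : ℝ) : ℂ) := by
          refine Finset.sum_congr rfl fun m _ => ?_
          rw [Complex.ofReal_sum]
          refine Finset.sum_congr rfl fun m' _ => ?_
          have hpull : ∑ j₁ ∈ J, ∑ j₂ ∈ J,
              ((W m * K m : ℝ) : ℂ) * ((W m' * K m' : ℝ) : ℂ) *
                ee (((j₁:ℝ) - (j₂:ℝ)) * (((m:ℝ) - (m':ℝ)) / (n:ℝ)))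
              = ((W m * K m : ℝ) : ℂ) * ((W m' * K m' : ℝ) : ℂ) *
                  ∑ j₁ ∈ J, ∑ j₂ ∈ J, ee (((j₁:ℝ) - (j₂:ℝ)) * (((m:ℝ) - (m':ℝ)) / (n:ℝ))) := by
            rw [Finset.mul_sum]
            refine Finset.sum_congr rfl fun j₁ _ => ?_
            rw [Finset.mul_sum]
          rw [hpull, sumA n (((m:ℝ) - (m':ℝ)) / (n:ℝ))]
          have hFc : F (m - m')
              = Complex.normSq (∑ j ∈ J, ee ((j:ℝ) * (((m:ℝ) - (m':ℝ)) / (n:ℝ)))) := by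
            simp only [hF]
            norm_num
          rw [hFc]
          push_cast
          ring
  rw [key]
  have hFnn : ∀ k : ℤ, 0 ≤ F k := fun k => Complex.normSq_nonneg _
  have hF0 : F 0 = (n:ℝ)^2 := by
    simp only [hF]
    have h1 : ∀ j ∈ J, ee ((j:ℝ) * (((0:ℤ):ℝ)/(n:ℝ))) = 1 := by
      intro j _; simp [ee]
    rw [Finset.sum_congr rfl h1, Finset.sum_const]
    simp only [hJ, Nat.card_Icc, Nat.add_sub_cancel, nsmul_eq_mul, mul_one]
    rw [Complex.normSq_natCast]
    ring
  have hstep : ∀ m ∈ s, ∑ m' ∈ s, (W m * K m) * (W m' * K m') * F (m - m')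
      ≤ W m * (65 * Wstar * Kstar^2 * (n:ℝ)^2) := by
    intro m hm
    have hWm := hW0 m hm
    have habsK : ∀ m'' ∈ s, |W m'' * K m''| ≤ W m'' * Kstar := by
      intro m'' hm''
      rw [abs_mul, abs_of_nonneg (hW0 m'' hm'')]
      exact mul_le_mul_of_nonneg_left (hKs m'' hm'') (hW0 m'' hm'')
    have hterm : ∀ m' ∈ s, (W m * K m) * (W m' * K m') * F (m - m')
        ≤ (W m * Kstar) * (W m' * Kstar) * F (m - m') := by
      intro m' hm'
      refine mul_le_mul_of_nonneg_right ?_ (hFnn _)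
      calc (W m * K m) * (W m' * K m') ≤ |(W m * K m) * (W m' * K m')| := le_abs_self _
        _ = |W m * K m| * |W m' * K m'| := abs_mul _ _
        _ ≤ (W m * Kstar) * (W m' * Kstar) :=
            mul_le_mul (habsK m hm) (habsK m' hm') (abs_nonneg _)
              (mul_nonneg hWm hKs0)
    have hsplit : ∑ m' ∈ s, (W m * Kstar) * (W m' * Kstar) * F (m - m')
        = (W m * Kstar) * (W m * Kstar) * F 0
          + ∑ m' ∈ s.erase m, (W m * Kstar) * (W m' * Kstar) * F (m - m') := by
      rw [← Finset.add_sum_erase s _ hm, sub_self]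
    have hoff : ∀ m' ∈ s.erase m, (W m * Kstar) * (W m' * Kstar) * F (m - m')
        ≤ (W m * Kstar * (Wstar * Kstar) * (16 * (n:ℝ)^2)) * (1 / (((m - m' : ℤ)):ℝ)^2) := by
      intro m' hm'
      obtain ⟨hne, hm's⟩ := Finset.mem_erase.mp hm'
      have hd0 : m - m' ≠ 0 := sub_ne_zero.mpr (Ne.symm hne)
      have hdn : |m - m'| ≤ (n : ℤ) := by
        simp only [hs, Finset.mem_Icc] at hm hm's
        have h2n : (2 * mn : ℤ) ≤ (n : ℤ) := by exact_mod_cast hmn2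
        rw [abs_le]
        omega
      have hFb : F (m - m') ≤ 16 * (n:ℝ)^2 / (((m - m' : ℤ)):ℝ)^2 := by
        simp only [hF]
        exact geom_bound hn hd0 hdn
      have e2 : W m' * Kstar ≤ Wstar * Kstar :=
        mul_le_mul_of_nonneg_right (hWs m' hm's) hKs0
      calc (W m * Kstar) * (W m' * Kstar) * F (m - m')
          ≤ (W m * Kstar) * (Wstar * Kstar) * (16 * (n:ℝ)^2 / (((m - m' : ℤ)):ℝ)^2) := by
            refine mul_le_mul (mul_le_mul_of_nonneg_left e2 (mul_nonneg hWm hKs0))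
              hFb (hFnn _) ?_
            exact mul_nonneg (mul_nonneg hWm hKs0) (mul_nonneg hWs0 hKs0)
        _ = (W m * Kstar * (Wstar * Kstar) * (16 * (n:ℝ)^2)) * (1 / (((m - m' : ℤ)):ℝ)^2) := by
            ring
    have hinvsum : ∑ m' ∈ s.erase m, (1:ℝ) / (((m - m' : ℤ)):ℝ)^2 ≤ 4 := by
      have himg : ∑ m' ∈ s.erase m, (1:ℝ) / (((m - m' : ℤ)):ℝ)^2
          = ∑ k ∈ (s.erase m).image (fun m' => m - m'), 1 / ((k:ℝ))^2 := by
        rw [Finset.sum_image]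
        intro a _ b _ h
        have h' : m - a = m - b := h
        omega
      have hsub : (s.erase m).image (fun m' => m - m')
          ⊆ (Finset.Icc (-((2*mn : ℕ) : ℤ)) (((2*mn : ℕ)) : ℤ)).erase 0 := by
        intro k hk
        obtain ⟨m', hm', rfl⟩ := Finset.mem_image.mp hk
        obtain ⟨hne, hm's⟩ := Finset.mem_erase.mp hm'
        simp only [hs, Finset.mem_Icc] at hm hm's
        simp only [Finset.mem_erase, Finset.mem_Icc]
        push_cast
        omega
      calc ∑ m' ∈ s.erase m, (1:ℝ) / (((m - m' : ℤ)):ℝ)^2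
          = ∑ k ∈ (s.erase m).image (fun m' => m - m'), 1 / ((k:ℝ))^2 := himg
        _ ≤ ∑ k ∈ (Finset.Icc (-((2*mn : ℕ) : ℤ)) (((2*mn : ℕ)) : ℤ)).erase 0, 1 / ((k:ℝ))^2 := by
            refine Finset.sum_le_sum_of_subset_of_nonneg hsub ?_
            intro k _ _
            positivity
        _ ≤ 4 - 2 / ((2*mn : ℕ) : ℝ) := symsum (2*mn)
        _ ≤ 4 := by
            have : (0:ℝ) ≤ 2 / ((2*mn : ℕ) : ℝ) := by positivity
            linarith
    have hC0 : (0:ℝ) ≤ W m * Kstar * (Wstar * Kstar) * (16 * (n:ℝ)^2) := by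
      have := mul_nonneg hWm hKs0
      have := mul_nonneg hWs0 hKs0
      positivity
    calc ∑ m' ∈ s, (W m * K m) * (W m' * K m') * F (m - m')
        ≤ ∑ m' ∈ s, (W m * Kstar) * (W m' * Kstar) * F (m - m') :=
          Finset.sum_le_sum hterm
      _ = (W m * Kstar) * (W m * Kstar) * F 0
          + ∑ m' ∈ s.erase m, (W m * Kstar) * (W m' * Kstar) * F (m - m') := hsplit
      _ ≤ (W m * Kstar^2 * (n:ℝ)^2) * Wstar
          + (W m * Kstar * (Wstar * Kstar) * (16 * (n:ℝ)^2)) * 4 := by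
          have h1 : (W m * Kstar) * (W m * Kstar) * F 0 = (W m * Kstar^2 * (n:ℝ)^2) * W m := by
            rw [hF0]; ring
          have h2 : (W m * Kstar^2 * (n:ℝ)^2) * W m ≤ (W m * Kstar^2 * (n:ℝ)^2) * Wstar :=
            mul_le_mul_of_nonneg_left (hWs m hm) (by positivity)
          have h3 : ∑ m' ∈ s.erase m, (W m * Kstar) * (W m' * Kstar) * F (m - m')
              ≤ ∑ m' ∈ s.erase m, (W m * Kstar * (Wstar * Kstar) * (16 * (n:ℝ)^2))
                  * (1 / (((m - m' : ℤ)):ℝ)^2) := Finset.sum_le_sum hoff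
          have h4 : ∑ m' ∈ s.erase m, (W m * Kstar * (Wstar * Kstar) * (16 * (n:ℝ)^2))
                  * (1 / (((m - m' : ℤ)):ℝ)^2)
              = (W m * Kstar * (Wstar * Kstar) * (16 * (n:ℝ)^2))
                  * ∑ m' ∈ s.erase m, (1:ℝ) / (((m - m' : ℤ)):ℝ)^2 := by
            rw [Finset.mul_sum]
          have h5 : (W m * Kstar * (Wstar * Kstar) * (16 * (n:ℝ)^2))
                  * ∑ m' ∈ s.erase m, (1:ℝ) / (((m - m' : ℤ)):ℝ)^2
              ≤ (W m * Kstar * (Wstar * Kstar) * (16 * (n:ℝ)^2)) * 4 :=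
            mul_le_mul_of_nonneg_left hinvsum hC0
          rw [h1]
          linarith [h3, h4 ▸ h5]
      _ ≤ W m * (65 * Wstar * Kstar^2 * (n:ℝ)^2) := by nlinarith [mul_nonneg hWm hKs0]
  calc ∑ m ∈ s, ∑ m' ∈ s, (W m * K m) * (W m' * K m') * F (m - m')
      ≤ ∑ m ∈ s, W m * (65 * Wstar * Kstar^2 * (n:ℝ)^2) := Finset.sum_le_sum hstep
    _ = 65 * Wstar * (Kstar * (n:ℝ))^2 := by
        rw [← Finset.sum_mul, hW1, one_mul]; ring
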